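/- Let Z_1,...,Z_N be identically distributed (but arbitrarily correlated) random variables over an m-ary alphabet, m ≥ 2, and let q_KT be the KT mixture probability q_KT(z^N) = [(2N_1-1)!!···(2N_m-1)!!]/[m(m+2)···(m+2N-2)]. Then E[log(1/q_KT(Z^N))] ≤ (m/2)·log(e(1 + 2N/m)) + (1/2)·log(πN) + N·H(Z_1). -/

import Mathlib

open Real Finset

/-- Marginal distribution of coordinate `j` under a joint pmf `μ` on `Fin N → Fin m`. -/
noncomputable def marg {m N : ℕ} (μ : (Fin N → Fin m) → ℝ) (j : Fin N) (i : Fin m) : ℝ :=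
  ∑ z : Fin N → Fin m, if z j = i then μ z else 0

/-- `(2k-1)!! = 1·3·5⋯(2k-1)` as a real number, with `(-1)!! = 1`. -/
def doubleFactorialOdd (k : ℕ) : ℝ := ∏ j ∈ Finset.range k, (2 * (j : ℝ) + 1)

/-- The KT mixture probability `q_KT(z^N) = [(2N₁-1)!!⋯(2N_m-1)!!]/[m(m+2)⋯(m+2N-2)]`. -/
noncomputable def ktProb (m N : ℕ) (z : Fin N → Fin m) : ℝ :=
  (∏ i : Fin m, doubleFactorialOdd ((Finset.univ.filter (fun t => z t = i)).card))
    / (∏ j ∈ Finset.range N, ((m : ℝ) + 2 * j))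

noncomputable def Gfun (y : ℝ) : ℝ := y / 2 * Real.log y - y / 2

/-- Trapezoid bound: for `x ≥ 0`, `2(x+1)·log(1+x) ≤ x(x+2)`. -/
lemma two_mul_log_le (x : ℝ) (hx : 0 ≤ x) : 2 * (x + 1) * Real.log (1 + x) ≤ x * (x + 2) := by
  set f : ℝ → ℝ := fun t => t * (t + 2) - 2 * (t + 1) * Real.log (1 + t) with hf
  have hder : ∀ t ∈ Set.Ici (0:ℝ), HasDerivAt f (2 * t - 2 * Real.log (1 + t)) t := by
    intro t ht
    have htpos : (0:ℝ) < 1 + t := by simp only [Set.mem_Ici] at ht; linarith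
    have h1 : HasDerivAt (fun s : ℝ => 1 + s) 1 t := by
      simpa using (hasDerivAt_id t).const_add (1:ℝ)
    have hlog : HasDerivAt (fun s : ℝ => Real.log (1 + s)) (1 / (1 + t)) t := h1.log htpos.ne'
    have hpoly : HasDerivAt (fun s : ℝ => s * (s + 2)) (2 * t + 2) t := by
      have := ((hasDerivAt_id t).mul ((hasDerivAt_id t).add_const 2))
      simp only [id_eq, one_mul, mul_one] at this
      exact this.congr_deriv (by ring)
    have hlin : HasDerivAt (fun s : ℝ => 2 * (s + 1)) 2 t := by
      simpa using ((hasDerivAt_id t).add_const (1:ℝ)).const_mul (2:ℝ)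
    have hprod : HasDerivAt (fun s : ℝ => 2 * (s + 1) * Real.log (1 + s))
        (2 * Real.log (1 + t) + 2 * (t + 1) * (1 / (1 + t))) t := hlin.mul hlog
    have := hpoly.sub hprod
    have heq : 2 * t + 2 - (2 * Real.log (1 + t) + 2 * (t + 1) * (1 / (1 + t)))
        = 2 * t - 2 * Real.log (1 + t) := by
      field_simp
      ring
    rw [heq] at this
    exact this
  have hmono : MonotoneOn f (Set.Ici (0:ℝ)) := by
    apply monotoneOn_of_deriv_nonneg (convex_Ici 0)
    · exact fun t ht => (hder t ht).continuousAt.continuousWithinAt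
    · intro t ht
      rw [interior_Ici] at ht
      exact (hder t (Set.mem_Ici.mpr (le_of_lt (Set.mem_Ioi.mp ht)))).differentiableAt.differentiableWithinAt
    · intro t ht
      rw [interior_Ici] at ht
      rw [Set.mem_Ioi] at ht
      rw [(hder t (le_of_lt ht)).deriv]
      have : Real.log (1 + t) ≤ t := by
        have := Real.log_le_sub_one_of_pos (x := 1 + t) (by linarith)
        linarith
      linarith
  have h0 : f 0 = 0 := by simp [hf]
  have := hmono (Set.self_mem_Ici) hx hx
  rw [h0] at this
  simp only [hf] at this
  linarith

/-- per-step upper bound: for `a > 0`, `log a ≤ G(a+2) - G(a)` -/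
lemma step_up {a : ℝ} (ha : 0 < a) : Real.log a ≤ Gfun (a + 2) - Gfun a := by
  have h2 : (0:ℝ) < a + 2 := by linarith
  have key : Real.log (a / (a + 2)) ≤ a / (a + 2) - 1 :=
    Real.log_le_sub_one_of_pos (by positivity)
  rw [Real.log_div (ne_of_gt ha) (ne_of_gt h2)] at key
  have h3 : a / (a + 2) - 1 = -(2 / (a + 2)) := by field_simp; ring
  rw [h3] at key
  have key2 : 2 / (a + 2) ≤ Real.log (a + 2) - Real.log a := by linarith
  have key3 : 2 ≤ (a + 2) * (Real.log (a + 2) - Real.log a) := by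
    have := mul_le_mul_of_nonneg_left key2 (le_of_lt h2)
    rwa [mul_div_cancel₀ _ (ne_of_gt h2)] at this
  unfold Gfun
  nlinarith [key3]

/-- `log(c+1) - log c ≤ (2c+1)/(2c(c+1))` for `c > 0` (trapezoid bound). -/
lemma log_ratio_le {c : ℝ} (hc : 0 < c) :
    Real.log (c + 1) - Real.log c ≤ (2*c + 1) / (2*c*(c+1)) := by
  have h := two_mul_log_le (1/c) (by positivity)
  have h1 : (1:ℝ) + 1/c = (c+1)/c := by field_simp
  rw [h1, Real.log_div (by positivity) (ne_of_gt hc)] at h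
  have hc1 : (0:ℝ) < c + 1 := by linarith
  rw [le_div_iff₀ (by positivity)]
  have h' := mul_le_mul_of_nonneg_left h (le_of_lt (show (0:ℝ) < c^2 by positivity))
  calc (Real.log (c+1) - Real.log c) * (2*c*(c+1))
      = c^2 * (2 * (1/c + 1) * (Real.log (c+1) - Real.log c)) := by field_simp; ring
    _ ≤ c^2 * (1/c * (1/c + 2)) := h'
    _ = 2*c + 1 := by field_simp; ring

/-- per-step lower bound: for `b ≥ 0`, `G(b+2) - G(b) ≤ log (b+1)` -/
lemma step_down {b : ℝ} (hb : 0 ≤ b) : Gfun (b + 2) - Gfun b ≤ Real.log (b + 1) := by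
  rcases eq_or_lt_of_le hb with h | h
  · subst h
    simp only [Gfun, zero_add, Real.log_zero]
    have : Real.log 2 ≤ 1 := by
      have := Real.log_le_sub_one_of_pos (x := 2) (by norm_num); linarith
    norm_num
    nlinarith
  · have h1 : (0:ℝ) < b + 1 := by linarith
    have h2 : (0:ℝ) < b + 2 := by linarith
    have hA := log_ratio_le h1
    have hB := log_ratio_le h
    have hA' : (b + 2) * (Real.log (b + 2) - Real.log (b + 1)) ≤ (2*b + 3) / (2*(b+1)) := by
      calc (b + 2) * (Real.log (b + 2) - Real.log (b + 1))
          = (b+2) * (Real.log ((b+1) + 1) - Real.log (b + 1)) := by rw [show b+1+1 = b+2 by ring]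
        _ ≤ (b+2) * ((2*(b+1) + 1) / (2*(b+1)*((b+1)+1))) :=
            mul_le_mul_of_nonneg_left hA (le_of_lt h2)
        _ = (2*b + 3) / (2*(b+1)) := by field_simp; ring
    have hB' : b * (Real.log (b + 1) - Real.log b) ≤ (2*b + 1) / (2*(b+1)) := by
      have := mul_le_mul_of_nonneg_left hB hb
      calc b * (Real.log (b + 1) - Real.log b)
          ≤ b * ((2*b + 1) / (2*b*(b+1))) := this
        _ = (2*b + 1) / (2*(b+1)) := by field_simp
    have hfrac : (2*b+3)/(2*(b+1)) + (2*b+1)/(2*(b+1)) = 2 := by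
      rw [← add_div, div_eq_iff (by positivity : (2:ℝ)*(b+1) ≠ 0)]; ring
    unfold Gfun
    nlinarith [hA', hB', hfrac]

lemma sum_log_P (m N : ℕ) (hm : 0 < m) :
    ∑ j ∈ Finset.range N, Real.log ((m:ℝ) + 2 * j) ≤ Gfun ((m:ℝ) + 2 * N) - Gfun m := by
  have tel : ∑ j ∈ Finset.range N,
      (Gfun ((m:ℝ) + 2 * (j+1 : ℕ)) - Gfun ((m:ℝ) + 2 * j)) = Gfun ((m:ℝ) + 2*N) - Gfun m := by
    have := Finset.sum_range_sub (fun j : ℕ => Gfun ((m:ℝ) + 2 * j)) N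
    simpa using this
  rw [← tel]
  apply Finset.sum_le_sum
  intro j _
  have ha : (0:ℝ) < (m:ℝ) + 2 * j := by
    have : (1:ℝ) ≤ (m:ℝ) := by exact_mod_cast hm
    positivity
  have := step_up ha
  have he : ((m:ℝ) + 2 * (j+1 : ℕ)) = ((m:ℝ) + 2 * j) + 2 := by push_cast; ring
  rw [he]
  exact this

lemma sum_log_D (k : ℕ) : Gfun (2 * k) ≤ Real.log (doubleFactorialOdd k) := by
  have hpos : ∀ j ∈ Finset.range k, (2 * (j:ℝ) + 1) ≠ 0 := by
    intro j _; positivity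
  rw [doubleFactorialOdd, Real.log_prod hpos]
  have tel : ∑ j ∈ Finset.range k,
      (Gfun (2 * ((j:ℕ)+1 : ℕ)) - Gfun (2 * (j:ℝ))) = Gfun (2*(k:ℝ)) - Gfun (2*(0:ℕ)) := by
    exact Finset.sum_range_sub (fun j : ℕ => Gfun (2 * (j:ℝ))) k
  have hG0 : Gfun (2*((0:ℕ):ℝ)) = 0 := by simp [Gfun]
  rw [hG0, sub_zero] at tel
  rw [← tel]
  apply Finset.sum_le_sum
  intro j _
  have := step_down (b := 2*(j:ℝ)) (by positivity)
  have he : (2:ℝ) * ((j:ℕ)+1 : ℕ) = 2*(j:ℝ) + 2 := by push_cast; ring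
  rw [he]
  exact this

theorem kt_pointwise (m N : ℕ) (hm : 2 ≤ m) (hN : 0 < N) (z : Fin N → Fin m) :
    Real.log (1 / ktProb m N z)
      ≤ ((m:ℝ)/2) * Real.log (Real.exp 1 * (1 + 2*N/m)) + (1/2) * Real.log (Real.pi * N)
        + (N:ℝ) * ∑ i : Fin m,
            Real.negMulLog ((((Finset.univ.filter (fun t => z t = i)).card : ℕ) : ℝ) / N) := by
  set c : Fin m → ℕ := fun i => (Finset.univ.filter (fun t => z t = i)).card with hc
  have hm0 : (0:ℝ) < m := by positivity
  have hN0 : (0:ℝ) < N := by exact_mod_cast hN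
  -- total count
  have hc_sum : ∑ i : Fin m, (c i : ℝ) = N := by
    have h1 : (Finset.univ : Finset (Fin N)).card = ∑ i ∈ Finset.univ, c i :=
      Finset.card_eq_sum_card_fiberwise (fun t _ => Finset.mem_univ (z t))
    have h2 : (Finset.univ : Finset (Fin N)).card = N := by simp
    have h3 : ∑ i : Fin m, c i = N := by rw [← h1, h2]
    exact_mod_cast h3
  -- positivity
  have hdfo_pos : ∀ k : ℕ, 0 < doubleFactorialOdd k := by
    intro k
    apply Finset.prod_pos
    intro j _; positivity
  have hnum_pos : (0:ℝ) < ∏ i : Fin m, doubleFactorialOdd (c i) :=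
    Finset.prod_pos (fun i _ => hdfo_pos _)
  have hden_pos : (0:ℝ) < ∏ j ∈ Finset.range N, ((m:ℝ) + 2 * j) := by
    apply Finset.prod_pos
    intro j _; positivity
  -- expand the log
  have hlogq : Real.log (1 / ktProb m N z)
      = ∑ j ∈ Finset.range N, Real.log ((m:ℝ) + 2 * j)
        - ∑ i : Fin m, Real.log (doubleFactorialOdd (c i)) := by
    rw [one_div, Real.log_inv, ktProb, Real.log_div hnum_pos.ne' hden_pos.ne',
      Real.log_prod (fun i _ => (hdfo_pos _).ne'),
      Real.log_prod (fun j _ => by positivity)]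
    ring
  -- bound each piece
  have hP := sum_log_P m N (by omega)
  have hD : ∀ i : Fin m, Gfun (2 * (c i : ℝ)) ≤ Real.log (doubleFactorialOdd (c i)) :=
    fun i => sum_log_D (c i)
  have hDsum : ∑ i : Fin m, Gfun (2 * (c i : ℝ))
      ≤ ∑ i : Fin m, Real.log (doubleFactorialOdd (c i)) :=
    Finset.sum_le_sum (fun i _ => hD i)
  -- identity for Gfun (2k)
  have hG2 : ∀ k : ℕ, Gfun (2 * (k:ℝ)) = (k:ℝ) * Real.log k + (k:ℝ) * (Real.log 2 - 1) := by
    intro k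
    rcases Nat.eq_zero_or_pos k with hk | hk
    · subst hk; simp [Gfun]
    · have hk0 : (0:ℝ) < k := by exact_mod_cast hk
      unfold Gfun
      rw [Real.log_mul (by norm_num) hk0.ne']
      ring
  -- identity for negMulLog
  have hNML : ∀ k : ℕ, (N:ℝ) * Real.negMulLog ((k:ℝ)/N)
      = (k:ℝ) * Real.log N - (k:ℝ) * Real.log k := by
    intro k
    rcases Nat.eq_zero_or_pos k with hk | hk
    · subst hk; simp [Real.negMulLog]
    · have hk0 : (0:ℝ) < k := by exact_mod_cast hk
      rw [Real.negMulLog, Real.log_div hk0.ne' hN0.ne']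
      field_simp
      ring
  -- abbreviations
  set S : ℝ := ∑ i : Fin m, (c i : ℝ) * Real.log (c i) with hS
  have hDsum' : (∑ i : Fin m, (c i : ℝ) * Real.log (c i)) + (N:ℝ) * (Real.log 2 - 1)
      ≤ ∑ i : Fin m, Real.log (doubleFactorialOdd (c i)) := by
    calc (∑ i : Fin m, (c i : ℝ) * Real.log (c i)) + (N:ℝ) * (Real.log 2 - 1)
        = ∑ i : Fin m, ((c i : ℝ) * Real.log (c i) + (c i : ℝ) * (Real.log 2 - 1)) := by
          rw [Finset.sum_add_distrib, ← Finset.sum_mul, hc_sum]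
      _ = ∑ i : Fin m, Gfun (2 * (c i : ℝ)) := by
          exact Finset.sum_congr rfl (fun i _ => (hG2 (c i)).symm)
      _ ≤ _ := hDsum
  have hNMLsum : (N:ℝ) * ∑ i : Fin m, Real.negMulLog ((c i : ℝ)/N)
      = (N:ℝ) * Real.log N - S := by
    rw [Finset.mul_sum]
    calc ∑ i : Fin m, (N:ℝ) * Real.negMulLog ((c i : ℝ)/N)
        = ∑ i : Fin m, ((c i:ℝ) * Real.log N - (c i:ℝ) * Real.log (c i)) :=
          Finset.sum_congr rfl (fun i _ => hNML (c i))
      _ = (N:ℝ) * Real.log N - S := by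
          rw [Finset.sum_sub_distrib, ← Finset.sum_mul, hc_sum, hS]
  -- key scalar inequality
  have key1 : (N:ℝ) * Real.log ((m:ℝ) + 2*N) - (N:ℝ)*Real.log 2 - (N:ℝ)*Real.log N
      ≤ (m:ℝ)/2 := by
    have h := Real.log_le_sub_one_of_pos (x := ((m:ℝ) + 2*N)/(2*N)) (by positivity)
    rw [Real.log_div (by positivity) (by positivity),
      Real.log_mul (by norm_num) hN0.ne'] at h
    have h2 : ((m:ℝ) + 2*N)/(2*N) - 1 = (m:ℝ)/(2*N) := by field_simp; ring
    rw [h2] at h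
    have := mul_le_mul_of_nonneg_left h hN0.le
    calc (N:ℝ) * Real.log ((m:ℝ) + 2*N) - (N:ℝ)*Real.log 2 - (N:ℝ)*Real.log N
        = (N:ℝ) * (Real.log ((m:ℝ) + 2*N) - (Real.log 2 + Real.log N)) := by ring
      _ ≤ (N:ℝ) * ((m:ℝ)/(2*N)) := this
      _ = (m:ℝ)/2 := by field_simp
  have key2 : 0 ≤ Real.log (Real.pi * N) := by
    apply Real.log_nonneg
    nlinarith [Real.pi_gt_three, hN0, (show (1:ℝ) ≤ N by exact_mod_cast hN)]
  have key3 : Real.log (Real.exp 1 * (1 + 2*(N:ℝ)/m))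
      = 1 + Real.log ((m:ℝ) + 2*N) - Real.log m := by
    rw [Real.log_mul (Real.exp_ne_zero 1) (by positivity), Real.log_exp]
    rw [show (1:ℝ) + 2*(N:ℝ)/m = ((m:ℝ) + 2*N)/m by field_simp]
    rw [Real.log_div (by positivity) hm0.ne']
    ring
  -- assemble
  rw [hlogq, hNMLsum, key3]
  have hmain : ∑ j ∈ Finset.range N, Real.log ((m:ℝ) + 2 * j)
        - ∑ i : Fin m, Real.log (doubleFactorialOdd (c i))
      ≤ (Gfun ((m:ℝ) + 2*N) - Gfun m) - (S + (N:ℝ) * (Real.log 2 - 1)) := by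
    have := sub_le_sub hP hDsum'
    simpa [hS] using this
  refine hmain.trans ?_
  unfold Gfun
  nlinarith [key1, key2]

/-- For identically distributed (but arbitrarily correlated) `Z_1,…,Z_N` over an
`m`-ary alphabet, `m ≥ 2`, the expected KT codelength satisfies
`E[log(1/q_KT(Z^N))] ≤ (m/2)·log(e(1+2N/m)) + (1/2)·log(πN) + N·H(Z_1)`. -/
theorem kt_expected_length_correlated (m N : ℕ) (hm : 2 ≤ m) (hN : 0 < N)
    (μ : (Fin N → Fin m) → ℝ) (hμ0 : ∀ z, 0 ≤ μ z) (hμ1 : ∑ z, μ z = 1)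
    (hid : ∀ j j' : Fin N, ∀ i : Fin m, marg μ j i = marg μ j' i) :
    ∑ z, μ z * Real.logb 2 (1 / ktProb m N z)
      ≤ ((m : ℝ) / 2) * Real.logb 2 (Real.exp 1 * (1 + 2 * N / m))
        + (1 / 2) * Real.logb 2 (Real.pi * N)
        + (N : ℝ) * (-∑ i : Fin m,
            marg μ ⟨0, hN⟩ i * Real.logb 2 (marg μ ⟨0, hN⟩ i)) := by
  have hN0 : (0:ℝ) < N := by exact_mod_cast hN
  set j0 : Fin N := ⟨0, hN⟩
  set p : Fin m → ℝ := fun i => marg μ j0 i with hp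
  set cnt : Fin m → (Fin N → Fin m) → ℕ :=
    fun i z => (Finset.univ.filter (fun t => z t = i)).card with hcnt
  -- expectation of counts equals N * p i
  have hcount : ∀ i : Fin m,
      ∑ z : Fin N → Fin m, μ z * (cnt i z : ℝ) = N * p i := by
    intro i
    have hcard : ∀ z : Fin N → Fin m,
        ((cnt i z : ℕ) : ℝ) = ∑ t : Fin N, (if z t = i then (1:ℝ) else 0) := by
      intro z
      rw [hcnt]
      simp only [Finset.card_filter]
      push_cast
      rfl
    calc ∑ z, μ z * (cnt i z : ℝ)
        = ∑ z, ∑ t : Fin N, (if z t = i then μ z else 0) := by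
          refine Finset.sum_congr rfl fun z _ => ?_
          rw [hcard z, Finset.mul_sum]
          exact Finset.sum_congr rfl fun t _ => by split <;> simp
      _ = ∑ t : Fin N, ∑ z, (if z t = i then μ z else 0) := Finset.sum_comm
      _ = ∑ t : Fin N, marg μ t i := by simp only [marg]
      _ = ∑ _t : Fin N, p i := Finset.sum_congr rfl fun t _ => hid t j0 i
      _ = N * p i := by
          rw [Finset.sum_const, Finset.card_univ, Fintype.card_fin, nsmul_eq_mul]
  -- Jensen per symbol
  have hjensen : ∀ i : Fin m,
      ∑ z, μ z * Real.negMulLog ((cnt i z : ℝ) / N) ≤ Real.negMulLog (p i) := by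
    intro i
    have h := Real.concaveOn_negMulLog.le_map_sum (t := Finset.univ) (w := μ)
      (p := fun z => (cnt i z : ℝ) / N) (fun z _ => hμ0 z) hμ1
      (fun z _ => by
        simp only [Set.mem_Ici]
        positivity)
    simp only [smul_eq_mul] at h
    have hmean : ∑ z, μ z * ((cnt i z : ℝ) / N) = p i := by
      calc ∑ z, μ z * ((cnt i z : ℝ) / N)
          = ∑ z, (μ z * (cnt i z : ℝ)) / N :=
            Finset.sum_congr rfl fun z _ => by ring
        _ = (∑ z, μ z * (cnt i z : ℝ)) / N := by rw [← Finset.sum_div]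
        _ = (N * p i) / N := by rw [hcount i]
        _ = p i := by field_simp
    rwa [hmean] at h
  -- natural-log version
  have HLN : ∑ z, μ z * Real.log (1 / ktProb m N z)
      ≤ ((m:ℝ)/2) * Real.log (Real.exp 1 * (1 + 2*N/m)) + (1/2) * Real.log (Real.pi * N)
        + (N:ℝ) * (-∑ i : Fin m, p i * Real.log (p i)) := by
    set C : ℝ := ((m:ℝ)/2) * Real.log (Real.exp 1 * (1 + 2*N/m))
      + (1/2) * Real.log (Real.pi * N) with hC
    have step1 : ∑ z, μ z * Real.log (1 / ktProb m N z)
        ≤ ∑ z, μ z * (C + (N:ℝ) * ∑ i : Fin m, Real.negMulLog ((cnt i z : ℝ) / N)) := by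
      refine Finset.sum_le_sum fun z _ => ?_
      refine mul_le_mul_of_nonneg_left ?_ (hμ0 z)
      have := kt_pointwise m N hm hN z
      rw [hC]
      convert this using 2 <;> ring
    have step2 : ∑ z, μ z * (C + (N:ℝ) * ∑ i : Fin m, Real.negMulLog ((cnt i z : ℝ) / N))
        = C + (N:ℝ) * ∑ i : Fin m, ∑ z, μ z * Real.negMulLog ((cnt i z : ℝ) / N) := by
      rw [Finset.sum_congr rfl (fun z _ => mul_add (μ z) C _), Finset.sum_add_distrib,
        ← Finset.sum_mul, hμ1, one_mul]
      congr 1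
      calc ∑ z, μ z * ((N:ℝ) * ∑ i : Fin m, Real.negMulLog ((cnt i z : ℝ) / N))
          = ∑ z, ∑ i : Fin m, (N:ℝ) * (μ z * Real.negMulLog ((cnt i z : ℝ) / N)) := by
            refine Finset.sum_congr rfl fun z _ => ?_
            rw [Finset.mul_sum, Finset.mul_sum]
            exact Finset.sum_congr rfl fun i _ => by ring
        _ = ∑ i : Fin m, ∑ z, (N:ℝ) * (μ z * Real.negMulLog ((cnt i z : ℝ) / N)) :=
            Finset.sum_comm
        _ = ∑ i : Fin m, (N:ℝ) * ∑ z, μ z * Real.negMulLog ((cnt i z : ℝ) / N) :=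
            Finset.sum_congr rfl fun i _ => (Finset.mul_sum _ _ _).symm
        _ = (N:ℝ) * ∑ i : Fin m, ∑ z, μ z * Real.negMulLog ((cnt i z : ℝ) / N) :=
            (Finset.mul_sum _ _ _).symm
    have step3 : (N:ℝ) * ∑ i : Fin m, ∑ z, μ z * Real.negMulLog ((cnt i z : ℝ) / N)
        ≤ (N:ℝ) * ∑ i : Fin m, Real.negMulLog (p i) :=
      mul_le_mul_of_nonneg_left (Finset.sum_le_sum fun i _ => hjensen i) hN0.le
    have hneg : ∑ i : Fin m, Real.negMulLog (p i) = -∑ i : Fin m, p i * Real.log (p i) := by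
      simp [Real.negMulLog, neg_mul, Finset.sum_neg_distrib]
    calc ∑ z, μ z * Real.log (1 / ktProb m N z)
        ≤ C + (N:ℝ) * ∑ i : Fin m, ∑ z, μ z * Real.negMulLog ((cnt i z : ℝ) / N) := by
          rw [← step2]; exact step1
      _ ≤ C + (N:ℝ) * ∑ i : Fin m, Real.negMulLog (p i) := by linarith [step3]
      _ = C + (N:ℝ) * (-∑ i : Fin m, p i * Real.log (p i)) := by rw [hneg]
      _ = _ := by rw [hC]
  -- convert to logb
  have hlog2 : (0:ℝ) < Real.log 2 := Real.log_pos (by norm_num)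
  simp only [Real.logb]
  have hLHS : ∑ z, μ z * (Real.log (1 / ktProb m N z) / Real.log 2)
      = (∑ z, μ z * Real.log (1 / ktProb m N z)) / Real.log 2 := by
    rw [Finset.sum_div]
    exact Finset.sum_congr rfl fun z _ => by ring
  rw [hLHS]
  have hRHS : ((m : ℝ) / 2) * (Real.log (Real.exp 1 * (1 + 2 * N / m)) / Real.log 2)
        + (1 / 2) * (Real.log (Real.pi * N) / Real.log 2)
        + (N : ℝ) * (-∑ i : Fin m, p i * (Real.log (p i) / Real.log 2))
      = (((m:ℝ)/2) * Real.log (Real.exp 1 * (1 + 2*N/m)) + (1/2) * Real.log (Real.pi * N)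
        + (N:ℝ) * (-∑ i : Fin m, p i * Real.log (p i))) / Real.log 2 := by
    have : ∑ i : Fin m, p i * (Real.log (p i) / Real.log 2)
        = (∑ i : Fin m, p i * Real.log (p i)) / Real.log 2 := by
      rw [Finset.sum_div]
      exact Finset.sum_congr rfl fun i _ => by ring
    rw [this]
    field_simp
  rw [hRHS]
  exact div_le_div_of_nonneg_right HLN hlog2.le
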